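/- For every integer d ≥ 2, the function p ↦ M^{d,p} is continuous on the open interval (1/(d+1), 1/2). (Lemma 7(i).) -/

import Mathlib

open Real Finset

/-- `frogT x y u = s_{u+1,u}(x,y)`, the diagonal of the recursion. -/
noncomputable def frogT (x y : ℝ) : ℕ → ℝ
  | 0 => 1
  | k + 1 => 1 - ∑ i ∈ (Finset.range (k + 1)).attach,
      (((k + 1).choose i.1 : ℕ) : ℝ) * (x * y ^ (i.1 + 1)) ^ (k + 1 - i.1) * frogT x y i.1
  decreasing_by exact Finset.mem_range.mp i.2

/-- `frogS d u x y = s_{d,u}(x,y)`. -/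
noncomputable def frogS (d u : ℕ) (x y : ℝ) : ℝ :=
  (((d - 1).choose u : ℕ) : ℝ) * (x * y ^ (u + 1)) ^ (d - 1 - u) * frogT x y u

noncomputable def pstar (d : ℕ) (p : ℝ) : ℝ := p * ((d : ℝ) - 1) / ((d : ℝ) - ((d : ℝ) + 1) * p)

noncomputable def phat (p : ℝ) : ℝ := p / (1 - p)

noncomputable def Phi (d : ℕ) (p : ℝ) : ℝ := Real.exp (-(1 - pstar d p) / (d : ℝ))

noncomputable def Lam (d : ℕ) (p l : ℝ) : ℝ := Real.exp (-((1 - phat p) * l) / ((d : ℝ) - 1))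

noncomputable def frogF (d : ℕ) (p l : ℝ) : ℝ :=
  Real.exp (-(pstar d p)) * ∑ u ∈ Finset.range d,
    Real.exp ((1 - phat p * (1 + (u : ℝ))) * l) * frogS d u (Phi d p) (Lam d p l)

noncomputable def frogM (d : ℕ) (p : ℝ) : ℝ := sSup (frogF d p '' Set.Ici 0)

lemma frogT_zero (x y : ℝ) : frogT x y 0 = 1 := by simp [frogT]

lemma frogT_succ (x y : ℝ) (k : ℕ) : frogT x y (k+1) =
    1 - ∑ i ∈ Finset.range (k + 1),
      (((k + 1).choose i : ℕ) : ℝ) * (x * y ^ (i + 1)) ^ (k + 1 - i) * frogT x y i := by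
  rw [frogT, ← Finset.sum_attach (Finset.range (k+1))
    (fun i => (((k + 1).choose i : ℕ) : ℝ) * (x * y ^ (i + 1)) ^ (k + 1 - i) * frogT x y i)]

noncomputable def frogB : ℕ → ℝ
  | 0 => 1
  | k + 1 => 1 + ∑ i ∈ (Finset.range (k + 1)).attach,
      (((k + 1).choose i.1 : ℕ) : ℝ) * frogB i.1
  decreasing_by exact Finset.mem_range.mp i.2

lemma frogB_succ (k : ℕ) : frogB (k+1) =
    1 + ∑ i ∈ Finset.range (k + 1), (((k + 1).choose i : ℕ) : ℝ) * frogB i := by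
  rw [frogB, ← Finset.sum_attach (Finset.range (k+1))
    (fun i => (((k + 1).choose i : ℕ) : ℝ) * frogB i)]

lemma frogB_pos : ∀ k, 0 < frogB k := by
  intro k
  induction k using Nat.strong_induction_on with
  | _ k ih =>
    cases k with
    | zero => simp [frogB]
    | succ n =>
      rw [frogB_succ]
      have : 0 ≤ ∑ i ∈ Finset.range (n + 1), (((n + 1).choose i : ℕ) : ℝ) * frogB i := by
        apply Finset.sum_nonneg
        intro i hi
        exact mul_nonneg (by positivity) (ih i (Finset.mem_range.mp hi)).le
      linarith

lemma abs_frogT_le {x y : ℝ} (hx0 : 0 ≤ x) (hx1 : x ≤ 1) (hy0 : 0 ≤ y) (hy1 : y ≤ 1) :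
    ∀ k, |frogT x y k| ≤ frogB k := by
  intro k
  induction k using Nat.strong_induction_on with
  | _ k ih =>
    cases k with
    | zero => simp [frogT_zero, frogB]
    | succ n =>
      rw [frogT_succ, frogB_succ]
      have h1 : |1 - ∑ i ∈ Finset.range (n + 1),
          (((n + 1).choose i : ℕ) : ℝ) * (x * y ^ (i + 1)) ^ (n + 1 - i) * frogT x y i|
          ≤ 1 + |∑ i ∈ Finset.range (n + 1),
          (((n + 1).choose i : ℕ) : ℝ) * (x * y ^ (i + 1)) ^ (n + 1 - i) * frogT x y i| := by
        calc _ ≤ |(1:ℝ)| + |∑ i ∈ Finset.range (n + 1),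
            (((n + 1).choose i : ℕ) : ℝ) * (x * y ^ (i + 1)) ^ (n + 1 - i) * frogT x y i| :=
          abs_sub _ _
        _ = _ := by rw [abs_one]
      refine h1.trans ?_
      have h2 : |∑ i ∈ Finset.range (n + 1),
          (((n + 1).choose i : ℕ) : ℝ) * (x * y ^ (i + 1)) ^ (n + 1 - i) * frogT x y i|
          ≤ ∑ i ∈ Finset.range (n + 1), (((n + 1).choose i : ℕ) : ℝ) * frogB i := by
        refine (Finset.abs_sum_le_sum_abs _ _).trans (Finset.sum_le_sum ?_)
        intro i hi
        rw [abs_mul, abs_mul]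
        have hxy : |(x * y ^ (i + 1)) ^ (n + 1 - i)| ≤ 1 := by
          rw [abs_pow, abs_mul, abs_pow]
          apply pow_le_one₀ (by positivity)
          rw [abs_of_nonneg hx0, abs_of_nonneg hy0]
          exact mul_le_one₀ hx1 (by positivity) (pow_le_one₀ hy0 hy1)
        calc |(((n + 1).choose i : ℕ) : ℝ)| * |(x * y ^ (i + 1)) ^ (n + 1 - i)| * |frogT x y i|
            ≤ (((n + 1).choose i : ℕ) : ℝ) * 1 * frogB i := by
              apply mul_le_mul
              · apply mul_le_mul (le_of_eq (abs_of_nonneg (by positivity))) hxy (abs_nonneg _)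
                  (by positivity)
              · exact ih i (Finset.mem_range.mp hi)
              · exact abs_nonneg _
              · positivity
          _ = (((n + 1).choose i : ℕ) : ℝ) * frogB i := by ring
      linarith

lemma continuous_frogT : ∀ k, Continuous (fun q : ℝ × ℝ => frogT q.1 q.2 k) := by
  intro k
  induction k using Nat.strong_induction_on with
  | _ k ih =>
    cases k with
    | zero => simpa [frogT_zero] using continuous_const
    | succ n =>
      have : (fun q : ℝ × ℝ => frogT q.1 q.2 (n+1)) = fun q : ℝ × ℝ =>
          1 - ∑ i ∈ Finset.range (n + 1),
            (((n + 1).choose i : ℕ) : ℝ) * (q.1 * q.2 ^ (i + 1)) ^ (n + 1 - i) * frogT q.1 q.2 i := by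
        funext q; rw [frogT_succ]
      rw [this]
      apply Continuous.sub continuous_const
      apply continuous_finset_sum
      intro i hi
      exact ((continuous_const.mul (((continuous_fst.mul (continuous_snd.pow _)).pow _))).mul
        (ih i (Finset.mem_range.mp hi)))


lemma sum_frogS (d : ℕ) (hd : 1 ≤ d) (x y : ℝ) :
    ∑ u ∈ Finset.range d, frogS d u x y = 1 := by
  obtain ⟨m, rfl⟩ : ∃ m, d = m + 1 := ⟨d - 1, (Nat.succ_pred_eq_of_pos hd).symm⟩
  rw [Finset.sum_range_succ]
  have hS : frogS (m+1) m x y = frogT x y m := by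
    simp [frogS]
  rw [hS]
  cases m with
  | zero => simp [frogT_zero]
  | succ n =>
    rw [frogT_succ]
    have : ∑ u ∈ Finset.range (n+1), frogS (n+1+1) u x y =
        ∑ i ∈ Finset.range (n + 1),
          (((n + 1).choose i : ℕ) : ℝ) * (x * y ^ (i + 1)) ^ (n + 1 - i) * frogT x y i := by
      apply Finset.sum_congr rfl
      intro i _
      simp [frogS]
    rw [this]; ring


section facts
variable {d : ℕ} {p : ℝ}

lemma hd_cast (hd : 2 ≤ d) : (2:ℝ) ≤ (d:ℝ) := by exact_mod_cast hd

lemma p_pos (hp1 : 1 / ((d : ℝ) + 1) < p) : 0 < p := by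
  have : (0:ℝ) < 1 / ((d:ℝ)+1) := by positivity
  linarith

lemma den_pos (hd : 2 ≤ d) (hp2 : p < 1/2) : 0 < (d : ℝ) - ((d : ℝ) + 1) * p := by
  have h := hd_cast hd; nlinarith

lemma pstar_pos (hd : 2 ≤ d) (hp1 : 1 / ((d : ℝ) + 1) < p) (hp2 : p < 1/2) :
    0 < pstar d p := by
  have h := hd_cast hd
  exact div_pos (mul_pos (p_pos hp1) (by linarith)) (den_pos hd hp2)

lemma pstar_lt_one (hd : 2 ≤ d) (hp1 : 1 / ((d : ℝ) + 1) < p) (hp2 : p < 1/2) :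
    pstar d p < 1 := by
  have h := hd_cast hd
  rw [pstar, div_lt_one (den_pos hd hp2)]
  nlinarith

lemma pstar_mono (hd : 2 ≤ d) {q : ℝ} (hp1 : 1 / ((d : ℝ) + 1) < p) (hq2 : q < 1/2)
    (hpq : p ≤ q) : pstar d p ≤ pstar d q := by
  have h := hd_cast hd
  have hp0 := p_pos hp1
  have h1 : 0 < (d : ℝ) - ((d : ℝ) + 1) * p := den_pos hd (lt_of_le_of_lt hpq hq2)
  have h2 : 0 < (d : ℝ) - ((d : ℝ) + 1) * q := den_pos hd hq2
  rw [pstar, pstar, div_le_div_iff₀ h1 h2]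
  nlinarith [mul_nonneg (mul_nonneg (by linarith : (0:ℝ) ≤ (d:ℝ)-1) (by linarith : (0:ℝ) ≤ (d:ℝ))) (by linarith : (0:ℝ) ≤ q - p)]

lemma phat_lt_one (hp2 : p < 1/2) : phat p < 1 := by
  rw [phat, div_lt_one (by linarith)]; linarith

lemma phat_pos (hp1 : 1 / ((d : ℝ) + 1) < p) (hp2 : p < 1/2) : 0 < phat p :=
  div_pos (p_pos hp1) (by linarith)

lemma phat_gt (hp1 : 1 / ((d : ℝ) + 1) < p) (hp2 : p < 1/2) : 1 < phat p * d := by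
  have hd0 : (0:ℝ) < (d:ℝ) + 1 := by positivity
  have hp0 := p_pos hp1
  rw [phat, div_mul_eq_mul_div, lt_div_iff₀ (by linarith : (0:ℝ) < 1 - p)]
  rw [div_lt_iff₀ hd0] at hp1
  nlinarith

lemma phat_mono {q : ℝ} (hp0 : 0 ≤ p) (hpq : p ≤ q) (hq : q < 1) : phat p ≤ phat q := by
  rw [phat, phat, div_le_div_iff₀ (by linarith) (by linarith)]
  nlinarith

lemma Phi_pos : 0 < Phi d p := Real.exp_pos _
lemma Phi_lt_one (hd : 2 ≤ d) (hp1 : 1 / ((d : ℝ) + 1) < p) (hp2 : p < 1/2) :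
    Phi d p < 1 := by
  have h := hd_cast hd
  have := pstar_lt_one hd hp1 hp2
  rw [Phi, Real.exp_lt_one_iff]
  apply div_neg_of_neg_of_pos (by linarith) (by linarith)

lemma Lam_pos {l : ℝ} : 0 < Lam d p l := Real.exp_pos _
lemma Lam_le_one (hd : 2 ≤ d) (hp2 : p < 1/2) {l : ℝ} (hl : 0 ≤ l) : Lam d p l ≤ 1 := by
  have h := hd_cast hd
  have := phat_lt_one hp2
  rw [Lam, Real.exp_le_one_iff]
  apply div_nonpos_of_nonpos_of_nonneg (by nlinarith) (by linarith)

end facts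

noncomputable def gcoef (d : ℕ) (a : ℝ) (u : ℕ) : ℝ :=
  (1 - a * (1 + (u:ℝ))) - (1 - a) * ((u:ℝ) + 1) * ((d:ℝ) - 1 - (u:ℝ)) / ((d:ℝ) - 1)

lemma gcoef_neg {d : ℕ} {a : ℝ} {u : ℕ} (hd : 2 ≤ d) (ha : 1 < a * d)
    (hu : 1 ≤ u) (hud : u < d) : gcoef d a u < 0 := by
  have hdr : (2:ℝ) ≤ (d:ℝ) := by exact_mod_cast hd
  have hur : (1:ℝ) ≤ (u:ℝ) := by exact_mod_cast hu
  have hudr : (u:ℝ) + 1 ≤ (d:ℝ) := by exact_mod_cast hud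
  have h1 : (0:ℝ) < (d:ℝ) - 1 := by linarith
  have key : (1 - a * (1 + (u:ℝ))) * ((d:ℝ) - 1) - (1 - a) * ((u:ℝ) + 1) * ((d:ℝ) - 1 - (u:ℝ)) < 0 := by
    nlinarith [mul_nonneg (mul_nonneg (by linarith : (0:ℝ) ≤ (u:ℝ)) (by linarith : (0:ℝ) ≤ (d:ℝ) - (u:ℝ) - 1)) (by linarith : (0:ℝ) ≤ (d:ℝ) - 1),
      mul_pos (by linarith : (0:ℝ) < a * d - 1) (mul_pos (by linarith : (0:ℝ) < (u:ℝ) + 1) (by linarith : (0:ℝ) < (u:ℝ)))]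
  rw [gcoef, sub_neg]
  exact (lt_div_iff₀ h1).2 (by linarith)

lemma gcoef_anti {d : ℕ} {a₁ a : ℝ} {u : ℕ} (hd : 2 ≤ d) (ha : a₁ ≤ a) :
    gcoef d a u ≤ gcoef d a₁ u := by
  have hdr : (2:ℝ) ≤ (d:ℝ) := by exact_mod_cast hd
  have h1 : (0:ℝ) < (d:ℝ) - 1 := by linarith
  have key : gcoef d a₁ u - gcoef d a u = (a - a₁) * ((u:ℝ) + 1) * (u:ℝ) / ((d:ℝ) - 1) := by
    rw [gcoef, gcoef]
    field_simp
    ring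
  have : 0 ≤ gcoef d a₁ u - gcoef d a u := by
    rw [key]
    apply div_nonneg _ h1.le
    exact mul_nonneg (mul_nonneg (sub_nonneg.2 ha) (by positivity)) (Nat.cast_nonneg u)
  linarith

section terms
variable {d : ℕ} {p l : ℝ}

lemma term_zero (hd : 2 ≤ d) (hl : 0 ≤ l) :
    Real.exp ((1 - phat p * (1 + ((0:ℕ):ℝ))) * l) * frogS d 0 (Phi d p) (Lam d p l)
      = (Phi d p) ^ (d - 1) := by
  have hdr : (2:ℝ) ≤ (d:ℝ) := by exact_mod_cast hd
  have hcast : ((d - 1 : ℕ) : ℝ) = (d:ℝ) - 1 := by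
    have : 1 ≤ d := by omega
    push_cast [this]; ring
  have hL : (Lam d p l) ^ (d - 1) = Real.exp (-((1 - phat p) * l)) := by
    rw [Lam, ← Real.exp_nat_mul, hcast]
    have hne : (d:ℝ) - 1 ≠ 0 := by linarith
    field_simp
  rw [frogS, frogT_zero]
  simp only [Nat.choose_zero_right, Nat.cast_one, one_mul, mul_one, Nat.sub_zero, zero_add,
    pow_one, Nat.cast_zero]
  rw [mul_pow, hL]
  rw [show (1 - phat p * (1 + 0)) * l = (1 - phat p) * l by ring]
  rw [mul_comm (Phi d p ^ (d-1)), ← mul_assoc, ← Real.exp_add]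
  simp

lemma term_bound (hd : 2 ≤ d) (hp1 : 1 / ((d : ℝ) + 1) < p) (hp2 : p < 1/2)
    {a₁ : ℝ} (ha₁ : a₁ ≤ phat p) {u : ℕ} (hu : 1 ≤ u) (hud : u < d) (hl : 0 ≤ l) :
    Real.exp ((1 - phat p * (1 + (u:ℝ))) * l) * frogS d u (Phi d p) (Lam d p l)
      ≤ (((d - 1).choose u : ℕ) : ℝ) * frogB u * Real.exp (gcoef d a₁ u * l) := by
  have hdr : (2:ℝ) ≤ (d:ℝ) := by exact_mod_cast hd
  set a := phat p with ha
  set Φ := Phi d p with hΦ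
  set Λ := Lam d p l with hΛdef
  have hΦ0 : 0 < Φ := Phi_pos
  have hΦ1 : Φ ≤ 1 := (Phi_lt_one hd hp1 hp2).le
  have hΛ0 : 0 < Λ := Lam_pos
  have hΛ1 : Λ ≤ 1 := Lam_le_one hd hp2 hl
  have hT : frogT Φ Λ u ≤ frogB u :=
    (le_abs_self _).trans (abs_frogT_le hΦ0.le hΦ1 hΛ0.le hΛ1 u)
  set m := d - 1 - u with hm
  have hmc : ((m : ℕ) : ℝ) = (d:ℝ) - 1 - (u:ℝ) := by
    have h1 : u ≤ d - 1 := by omega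
    have h2 : 1 ≤ d := by omega
    push_cast [hm, h1, h2]; ring
  set c := (((d - 1).choose u : ℕ) : ℝ) with hc
  have hc0 : (0:ℝ) ≤ c := Nat.cast_nonneg _
  have hpow : (Φ * Λ ^ (u+1)) ^ m ≤ (Λ ^ (u+1)) ^ m := by
    apply pow_le_pow_left₀ (by positivity)
    exact mul_le_of_le_one_left (by positivity) hΦ1
  have step1 : Real.exp ((1 - a * (1 + (u:ℝ))) * l) * frogS d u Φ Λ
      ≤ Real.exp ((1 - a * (1 + (u:ℝ))) * l) * (c * (Λ ^ (u+1)) ^ m * frogB u) := by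
    apply mul_le_mul_of_nonneg_left _ (Real.exp_pos _).le
    rw [frogS]
    calc c * (Φ * Λ ^ (u+1)) ^ m * frogT Φ Λ u
        ≤ c * (Φ * Λ ^ (u+1)) ^ m * frogB u := by
          apply mul_le_mul_of_nonneg_left hT (by positivity)
      _ ≤ c * (Λ ^ (u+1)) ^ m * frogB u := by
          apply mul_le_mul_of_nonneg_right _ (frogB_pos u).le
          exact mul_le_mul_of_nonneg_left hpow hc0
  have hΛpow : (Λ ^ (u+1)) ^ m = Real.exp (-((1 - a) * l) * (((u:ℝ)+1) * ((d:ℝ)-1-(u:ℝ))) / ((d:ℝ)-1)) := by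
    rw [hΛdef, Lam, ← Real.exp_nat_mul, ← Real.exp_nat_mul]
    congr 1
    rw [hmc]
    push_cast
    ring
  have step2 : Real.exp ((1 - a * (1 + (u:ℝ))) * l) * (c * (Λ ^ (u+1)) ^ m * frogB u)
      = c * frogB u * Real.exp (gcoef d a u * l) := by
    rw [hΛpow, show Real.exp ((1 - a * (1 + (u:ℝ))) * l) *
        (c * Real.exp (-((1 - a) * l) * (((u:ℝ)+1) * ((d:ℝ)-1-(u:ℝ))) / ((d:ℝ)-1)) * frogB u)
        = c * frogB u * (Real.exp ((1 - a * (1 + (u:ℝ))) * l) *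
          Real.exp (-((1 - a) * l) * (((u:ℝ)+1) * ((d:ℝ)-1-(u:ℝ))) / ((d:ℝ)-1))) by ring,
      ← Real.exp_add]
    congr 2
    rw [gcoef]
    have h1 : ((d:ℝ) - 1) ≠ 0 := by linarith
    field_simp
    ring
  have step3 : c * frogB u * Real.exp (gcoef d a u * l)
      ≤ c * frogB u * Real.exp (gcoef d a₁ u * l) := by
    apply mul_le_mul_of_nonneg_left _ (mul_nonneg hc0 (frogB_pos u).le)
    apply Real.exp_le_exp.2
    exact mul_le_mul_of_nonneg_right (gcoef_anti hd ha₁) hl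
  calc Real.exp ((1 - a * (1 + (u:ℝ))) * l) * frogS d u Φ Λ
      ≤ _ := step1
    _ = _ := step2
    _ ≤ _ := step3

lemma frogF_zero (hd : 2 ≤ d) : frogF d p 0 = Real.exp (-(pstar d p)) := by
  have h1 : 1 ≤ d := by omega
  simp only [frogF, Lam, mul_zero, zero_mul, neg_zero, zero_div, Real.exp_zero, one_mul]
  rw [sum_frogS d h1, mul_one]

lemma frogF_le (hd : 2 ≤ d) (hp1 : 1 / ((d : ℝ) + 1) < p) (hp2 : p < 1/2)
    {a₁ : ℝ} (ha₁ : a₁ ≤ phat p) (hl : 0 ≤ l) :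
    frogF d p l ≤ Real.exp (-(pstar d p)) *
      ((Phi d p) ^ (d - 1) + ∑ u ∈ Finset.Ico 1 d,
        (((d - 1).choose u : ℕ) : ℝ) * frogB u * Real.exp (gcoef d a₁ u * l)) := by
  rw [frogF]
  apply mul_le_mul_of_nonneg_left _ (Real.exp_pos _).le
  rw [Finset.range_eq_Ico, Finset.sum_eq_sum_Ico_succ_bot (by omega : 0 < d)]
  apply add_le_add
  · exact le_of_eq (term_zero hd hl)
  · apply Finset.sum_le_sum
    intro u hu
    obtain ⟨hu1, hu2⟩ := Finset.mem_Ico.mp hu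
    exact term_bound hd hp1 hp2 ha₁ hu1 hu2 hl

end terms

lemma exists_L {d : ℕ} (hd : 2 ≤ d) {p₁ p₂ : ℝ} (h₁ : 1 / ((d : ℝ) + 1) < p₁)
    (h₂ : p₂ < 1/2) (h12 : p₁ ≤ p₂) :
    ∃ L, 0 ≤ L ∧ ∀ p ∈ Set.Icc p₁ p₂, ∀ l, L ≤ l → frogF d p l ≤ frogF d p 0 := by
  have hdr : (2:ℝ) ≤ (d:ℝ) := by exact_mod_cast hd
  have hp₁2 : p₁ < 1/2 := lt_of_le_of_lt h12 h₂
  set a₁ := phat p₁ with ha₁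
  have ha₁d : 1 < a₁ * d := phat_gt h₁ hp₁2
  have hΦ2 : Phi d p₂ < 1 := Phi_lt_one hd (lt_of_lt_of_le h₁ h12) h₂
  have hη : (0:ℝ) < 1 - Phi d p₂ ^ (d - 1) := by
    have := pow_lt_one₀ (Phi_pos (d := d) (p := p₂)).le hΦ2 (by omega : d - 1 ≠ 0)
    linarith
  have htend : Filter.Tendsto
      (fun l : ℝ => ∑ u ∈ Finset.Ico 1 d, (((d - 1).choose u : ℕ) : ℝ) * frogB u *
        Real.exp (gcoef d a₁ u * l)) Filter.atTop (nhds 0) := by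
    have h0 : (0:ℝ) = ∑ u ∈ Finset.Ico 1 d, (0:ℝ) := by simp
    rw [h0]
    apply tendsto_finset_sum
    intro u hu
    obtain ⟨hu1, hu2⟩ := Finset.mem_Ico.mp hu
    have hg : gcoef d a₁ u < 0 := gcoef_neg hd ha₁d hu1 hu2
    have : Filter.Tendsto (fun l : ℝ => Real.exp (gcoef d a₁ u * l)) Filter.atTop (nhds 0) :=
      Real.tendsto_exp_atBot.comp ((Filter.tendsto_const_mul_atBot_of_neg hg).2 Filter.tendsto_id)
    simpa using this.const_mul ((((d - 1).choose u : ℕ) : ℝ) * frogB u)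
  obtain ⟨L, hL⟩ := ((htend.eventually (gt_mem_nhds hη)).and (Filter.eventually_ge_atTop 0)).exists
  obtain ⟨hGL, hL0⟩ := hL
  refine ⟨L, hL0, ?_⟩
  rintro p ⟨hpl, hpr⟩ l hl
  have hp1 : 1 / ((d : ℝ) + 1) < p := lt_of_lt_of_le h₁ hpl
  have hp2 : p < 1/2 := lt_of_le_of_lt hpr h₂
  have hl0 : 0 ≤ l := le_trans hL0 hl
  have ha₁p : a₁ ≤ phat p := phat_mono (p_pos h₁).le hpl (by linarith)
  have step1 := frogF_le hd hp1 hp2 ha₁p hl0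
  have step2 : ∑ u ∈ Finset.Ico 1 d, (((d - 1).choose u : ℕ) : ℝ) * frogB u *
      Real.exp (gcoef d a₁ u * l) ≤ ∑ u ∈ Finset.Ico 1 d,
      (((d - 1).choose u : ℕ) : ℝ) * frogB u * Real.exp (gcoef d a₁ u * L) := by
    apply Finset.sum_le_sum
    intro u hu
    obtain ⟨hu1, hu2⟩ := Finset.mem_Ico.mp hu
    have hg : gcoef d a₁ u < 0 := gcoef_neg hd ha₁d hu1 hu2
    apply mul_le_mul_of_nonneg_left _ (mul_nonneg (Nat.cast_nonneg _) (frogB_pos u).le)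
    exact Real.exp_le_exp.2 (mul_le_mul_of_nonpos_left hl hg.le)
  have hΦp : Phi d p ^ (d - 1) ≤ Phi d p₂ ^ (d - 1) := by
    apply pow_le_pow_left₀ (Phi_pos (d := d) (p := p)).le _ (d - 1)
    apply Real.exp_le_exp.2
    have hps := pstar_mono hd hp1 h₂ hpr
    have hd0 : (0:ℝ) < (d:ℝ) := by linarith
    exact (div_le_div_iff_of_pos_right hd0).2 (by linarith)
  calc frogF d p l
      ≤ Real.exp (-(pstar d p)) * ((Phi d p) ^ (d - 1) + ∑ u ∈ Finset.Ico 1 d,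
          (((d - 1).choose u : ℕ) : ℝ) * frogB u * Real.exp (gcoef d a₁ u * l)) := step1
    _ ≤ Real.exp (-(pstar d p)) * 1 := by
        apply mul_le_mul_of_nonneg_left _ (Real.exp_pos _).le
        have : ∑ u ∈ Finset.Ico 1 d, (((d - 1).choose u : ℕ) : ℝ) * frogB u *
            Real.exp (gcoef d a₁ u * L) < 1 - Phi d p₂ ^ (d - 1) := hGL
        linarith
    _ = frogF d p 0 := by rw [mul_one, frogF_zero hd]

lemma continuous_frogS_xy (d u : ℕ) : Continuous (fun q : ℝ × ℝ => frogS d u q.1 q.2) := by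
  apply Continuous.mul
  · exact continuous_const.mul ((continuous_fst.mul (continuous_snd.pow _)).pow _)
  · exact continuous_frogT u

lemma continuous_frogF_snd (d : ℕ) (p : ℝ) : Continuous (frogF d p) := by
  unfold frogF
  apply continuous_const.mul
  apply continuous_finset_sum
  intro u _
  apply Continuous.mul
  · exact Real.continuous_exp.comp (continuous_const.mul continuous_id)
  · have hΛ : Continuous (fun l : ℝ => Lam d p l) :=
      Real.continuous_exp.comp ((continuous_const.mul continuous_id).neg.div_const _)
    exact (continuous_frogS_xy d u).comp (continuous_const.prodMk hΛ)

lemma frogM_exists_max {d : ℕ} {p L : ℝ} (hL : 0 ≤ L)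
    (htail : ∀ l, L ≤ l → frogF d p l ≤ frogF d p 0) :
    ∃ l₀ ∈ Set.Icc 0 L, frogM d p = frogF d p l₀ ∧ ∀ l, 0 ≤ l → frogF d p l ≤ frogF d p l₀ := by
  obtain ⟨l₀, hl₀mem, hmax⟩ := (isCompact_Icc (a := (0:ℝ)) (b := L)).exists_isMaxOn
    (Set.nonempty_Icc.2 hL) (continuous_frogF_snd d p).continuousOn
  have hbound : ∀ l, 0 ≤ l → frogF d p l ≤ frogF d p l₀ := by
    intro l hl
    by_cases hlL : l ≤ L
    · exact hmax ⟨hl, hlL⟩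
    · exact (htail l (le_of_not_ge hlL)).trans (hmax ⟨le_refl 0, hL⟩)
  refine ⟨l₀, hl₀mem, ?_, hbound⟩
  rw [frogM]
  apply le_antisymm
  · apply csSup_le ⟨frogF d p 0, Set.mem_image_of_mem _ Set.self_mem_Ici⟩
    rintro x ⟨l, hl, rfl⟩
    exact hbound l hl
  · exact le_csSup ⟨frogF d p l₀, by rintro x ⟨l, hl, rfl⟩; exact hbound l hl⟩
      ⟨l₀, hl₀mem.1, rfl⟩

lemma continuousOn_frogF_joint {d : ℕ} (hd : 2 ≤ d) {p₁ p₂ : ℝ}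
    (h₁ : 1 / ((d : ℝ) + 1) < p₁) (h₂ : p₂ < 1/2) :
    ContinuousOn (fun q : ℝ × ℝ => frogF d q.1 q.2) (Set.Icc p₁ p₂ ×ˢ (Set.univ : Set ℝ)) := by
  have hdr : (2:ℝ) ≤ (d:ℝ) := by exact_mod_cast hd
  have hmem : ∀ q : ℝ × ℝ, q ∈ Set.Icc p₁ p₂ ×ˢ (Set.univ : Set ℝ) →
      ((d:ℝ) - ((d:ℝ)+1) * q.1 ≠ 0 ∧ (1:ℝ) - q.1 ≠ 0) := by
    rintro q ⟨⟨hql, hqr⟩, -⟩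
    have hq2 : q.1 < 1/2 := lt_of_le_of_lt hqr h₂
    exact ⟨ne_of_gt (den_pos hd hq2), by linarith⟩
  have hpstar : ContinuousOn (fun q : ℝ × ℝ => pstar d q.1) (Set.Icc p₁ p₂ ×ˢ (Set.univ : Set ℝ)) := by
    apply ContinuousOn.div (by fun_prop) (by fun_prop)
    intro q hq; exact (hmem q hq).1
  have hphat : ContinuousOn (fun q : ℝ × ℝ => phat q.1) (Set.Icc p₁ p₂ ×ˢ (Set.univ : Set ℝ)) := by
    apply ContinuousOn.div (by fun_prop) (by fun_prop)
    intro q hq; exact (hmem q hq).2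
  have hPhi : ContinuousOn (fun q : ℝ × ℝ => Phi d q.1) (Set.Icc p₁ p₂ ×ˢ (Set.univ : Set ℝ)) :=
    Real.continuous_exp.comp_continuousOn ((continuousOn_const.sub hpstar).neg.div_const _)
  have hLam : ContinuousOn (fun q : ℝ × ℝ => Lam d q.1 q.2) (Set.Icc p₁ p₂ ×ˢ (Set.univ : Set ℝ)) :=
    Real.continuous_exp.comp_continuousOn
      (((continuousOn_const.sub hphat).mul continuous_snd.continuousOn).neg.div_const _)
  unfold frogF
  apply ContinuousOn.mul (Real.continuous_exp.comp_continuousOn hpstar.neg)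
  apply continuousOn_finset_sum
  intro u _
  apply ContinuousOn.mul
  · apply Real.continuous_exp.comp_continuousOn
    exact (continuousOn_const.sub (hphat.mul continuousOn_const)).mul continuous_snd.continuousOn
  · exact (continuous_frogS_xy d u).comp_continuousOn (hPhi.prodMk hLam)

/-- Lemma 7(i): for every integer `d ≥ 2`, the map `p ↦ M^{d,p}` is continuous
on the open interval `(1/(d+1), 1/2)`. -/
theorem frogM_continuousOn (d : ℕ) (hd : 2 ≤ d) :
    ContinuousOn (fun p : ℝ => frogM d p) (Set.Ioo (1 / ((d : ℝ) + 1)) (1 / 2)) := by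
  intro p₀ hp₀
  apply ContinuousAt.continuousWithinAt
  obtain ⟨hA, hB⟩ := hp₀
  set A := 1 / ((d : ℝ) + 1) with hAdef
  set r := min (p₀ - A) (1/2 - p₀) / 2 with hrdef
  have hr : 0 < r := by
    apply div_pos _ (by norm_num)
    exact lt_min (by linarith) (by linarith)
  set p₁ := p₀ - r with hp₁def
  set p₂ := p₀ + r with hp₂def
  have h₁ : A < p₁ := by
    have : r ≤ (p₀ - A) / 2 := by
      rw [hrdef]
      exact div_le_div_of_nonneg_right (min_le_left _ _) (by norm_num)
    simp only [hp₁def]; linarith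
  have h₂ : p₂ < 1/2 := by
    have : r ≤ (1/2 - p₀) / 2 := by
      rw [hrdef]
      exact div_le_div_of_nonneg_right (min_le_right _ _) (by norm_num)
    simp only [hp₂def]; linarith
  have h12 : p₁ ≤ p₂ := by simp only [hp₁def, hp₂def]; linarith
  obtain ⟨L, hL0, htail⟩ := exists_L hd h₁ h₂ h12
  have hKcompact : IsCompact (Set.Icc p₁ p₂ ×ˢ Set.Icc (0:ℝ) L) :=
    isCompact_Icc.prod isCompact_Icc
  have hFcont : ContinuousOn (fun q : ℝ × ℝ => frogF d q.1 q.2)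
      (Set.Icc p₁ p₂ ×ˢ Set.Icc (0:ℝ) L) :=
    (continuousOn_frogF_joint hd h₁ h₂).mono
      (Set.prod_mono_right (Set.subset_univ _))
  have hUC := hKcompact.uniformContinuousOn_of_continuous hFcont
  rw [Metric.uniformContinuousOn_iff] at hUC
  rw [Metric.continuousAt_iff]
  intro ε hε
  obtain ⟨δ, hδ0, hδ⟩ := hUC (ε/2) (by linarith)
  refine ⟨min δ r, lt_min hδ0 hr, ?_⟩
  intro p hp
  have hpδ : dist p p₀ < δ := lt_of_lt_of_le hp (min_le_left _ _)
  have hpr : dist p p₀ < r := lt_of_lt_of_le hp (min_le_right _ _)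
  rw [Real.dist_eq, abs_sub_lt_iff] at hpr
  have hpmem : p ∈ Set.Icc p₁ p₂ := ⟨by simp only [hp₁def]; linarith, by simp only [hp₂def]; linarith⟩
  have hp₀mem : p₀ ∈ Set.Icc p₁ p₂ := ⟨by simp only [hp₁def]; linarith, by simp only [hp₂def]; linarith⟩
  obtain ⟨lp, hlpmem, hMp, hboundp⟩ := frogM_exists_max hL0 (htail p hpmem)
  obtain ⟨l₀, hl₀mem, hMp₀, hbound₀⟩ := frogM_exists_max hL0 (htail p₀ hp₀mem)
  have hclose : ∀ l ∈ Set.Icc (0:ℝ) L, dist (frogF d p l) (frogF d p₀ l) < ε/2 := by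
    intro l hl
    have h1 : ((p, l) : ℝ × ℝ) ∈ Set.Icc p₁ p₂ ×ˢ Set.Icc (0:ℝ) L := ⟨hpmem, hl⟩
    have h2 : ((p₀, l) : ℝ × ℝ) ∈ Set.Icc p₁ p₂ ×ˢ Set.Icc (0:ℝ) L := ⟨hp₀mem, hl⟩
    have hdist : dist ((p, l) : ℝ × ℝ) ((p₀, l) : ℝ × ℝ) < δ := by
      rw [Prod.dist_eq]
      simp only [dist_self]
      rw [max_eq_left dist_nonneg]
      exact hpδ
    exact hδ (p, l) h1 (p₀, l) h2 hdist
  have hub1 : frogM d p ≤ frogM d p₀ + ε/2 := by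
    rw [hMp, hMp₀]
    have := hclose lp hlpmem
    rw [Real.dist_eq] at this
    have h1 : frogF d p lp ≤ frogF d p₀ lp + ε/2 := by
      cases abs_sub_lt_iff.mp this with
      | intro h _ => linarith
    exact h1.trans (by linarith [hbound₀ lp hlpmem.1])
  have hub2 : frogM d p₀ ≤ frogM d p + ε/2 := by
    rw [hMp, hMp₀]
    have := hclose l₀ hl₀mem
    rw [Real.dist_eq] at this
    have h1 : frogF d p₀ l₀ ≤ frogF d p l₀ + ε/2 := by
      cases abs_sub_lt_iff.mp this with
      | intro _ h => linarith
    exact h1.trans (by linarith [hboundp l₀ hl₀mem.1])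
  rw [Real.dist_eq, abs_sub_lt_iff]
  constructor <;> linarith
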